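/- arXiv:2605.27592 — 3 statements merged into one kernel-verified Lean document; each statement's English description precedes it below -/
import Mathlib

section
/- Let m : ℝ → ℝ be twice continuously differentiable and strictly increasing with m′(x) > 0 for all x, m(x₀) = 0 for some x₀ ∈ ℝ, and m(x) → ±1 as x → ±∞. For each E ∈ (0,1), let x₋(E) < x₊(E) denote the two unique solutions of m(x)² = E. Then, as E → 0⁺, ∫_{x₋(E)}^{x₊(E)} √(E − m(x)²) dx = πE/(2 m′(x₀)) + O(E^{3/2}). -/
open intervalIntegral Filter Asymptotics Real

lemma semicircle_integral (s : ℝ) (hs : 0 ≤ s) :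
    (∫ u in (-s)..s, Real.sqrt (s ^ 2 - u ^ 2)) = Real.pi * s ^ 2 / 2 := by
  have hg : Continuous fun u : ℝ => Real.sqrt (s ^ 2 - u ^ 2) :=
    (continuous_const.sub (continuous_pow 2)).sqrt
  have h := intervalIntegral.integral_comp_mul_deriv (a := (-1 : ℝ)) (b := 1)
      (f := fun v => s * v) (f' := fun _ => s)
      (g := fun u => Real.sqrt (s ^ 2 - u ^ 2))
      (fun x _ => by simpa using (hasDerivAt_id x).const_mul s)
      continuousOn_const hg
  simp only [mul_neg_one, mul_one] at h
  have hcongr : ∀ v : ℝ,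
      ((fun u => Real.sqrt (s ^ 2 - u ^ 2)) ∘ fun v => s * v) v * s
        = s ^ 2 * Real.sqrt (1 - v ^ 2) := by
    intro v
    simp only [Function.comp]
    rw [show s ^ 2 - (s * v) ^ 2 = s ^ 2 * (1 - v ^ 2) by ring,
      Real.sqrt_mul (sq_nonneg s), Real.sqrt_sq hs]
    ring
  rw [intervalIntegral.integral_congr (g := fun v =>
      s ^ 2 * Real.sqrt (1 - v ^ 2)) (fun v _ => hcongr v)] at h
  rw [intervalIntegral.integral_const_mul, integral_sqrt_one_sub_sq] at h
  rw [← h]; ring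

set_option maxHeartbeats 1000000 in
/-- for a strictly increasing C² mass profile with a simple zero at `x₀`
and limits `±1` at `±∞`, the Bohr–Sommerfeld phase integral between the turning points
`x₋(E) < x₊(E)` satisfies, as `E → 0⁺`,
`∫_{x₋(E)}^{x₊(E)} √(E − m(x)²) dx = πE/(2m′(x₀)) + O(E^{3/2})`. -/
theorem stmt12 (m : ℝ → ℝ) (hm : ContDiff ℝ 2 m)
    (hmono : StrictMono m) (hm' : ∀ x : ℝ, 0 < deriv m x)
    (x₀ : ℝ) (hx₀ : m x₀ = 0)
    (htop : Tendsto m atTop (nhds 1)) (hbot : Tendsto m atBot (nhds (-1)))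
    (xm xp : ℝ → ℝ)
    (hturn : ∀ E ∈ Set.Ioo (0 : ℝ) 1,
      xm E < xp E ∧ m (xm E) ^ 2 = E ∧ m (xp E) ^ 2 = E ∧
      ∀ x : ℝ, m x ^ 2 = E → x = xm E ∨ x = xp E) :
    (fun E : ℝ =>
        (∫ x in xm E..xp E, Real.sqrt (E - m x ^ 2)) -
          Real.pi * E / (2 * deriv m x₀)) =O[nhdsWithin 0 (Set.Ioi 0)]
      fun E : ℝ => E ^ ((3 : ℝ) / 2) := by
  have hmc : Continuous m := hm.continuous
  have hmd : Differentiable ℝ m := hm.differentiable (by norm_num)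
  have hdc : Continuous (deriv m) := hm.continuous_deriv one_le_two
  have hd1 : ContDiff ℝ 1 (deriv m) := by
    have h2 : ContDiff ℝ (1 + 1) m := by
      have : ((2 : ℕ) : WithTop ℕ∞) = 1 + 1 := by norm_num
      exact this ▸ hm
    exact (contDiff_succ_iff_deriv.mp h2).2.2
  have hddc : Continuous (deriv (deriv m)) := hd1.continuous_deriv le_rfl
  have hd₀ : 0 < deriv m x₀ := hm' x₀
  set I : Set ℝ := Set.Icc (x₀ - 1) (x₀ + 1) with hI
  have hx₀I : x₀ ∈ I := ⟨by linarith, by linarith⟩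
  have hIne : I.Nonempty := ⟨x₀, hx₀I⟩
  -- max of |m''| on I
  obtain ⟨zK, hzK, hKmax⟩ := isCompact_Icc.exists_isMaxOn hIne
    ((continuous_abs.comp hddc).continuousOn)
  set K := |deriv (deriv m) zK| with hKdef
  have hK0 : 0 ≤ K := abs_nonneg _
  have hKb : ∀ x ∈ I, |deriv (deriv m) x| ≤ K := fun x hx => hKmax hx
  -- Lipschitz estimate for deriv m on I
  have hLip : ∀ x ∈ I, |deriv m x - deriv m x₀| ≤ K * |x - x₀| := by
    intro x hx
    have := Convex.norm_image_sub_le_of_norm_deriv_le (f := deriv m) (s := I)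
      (fun y _ => (hd1.differentiable (by norm_num)).differentiableAt)
      (fun y hy => by simpa [Real.norm_eq_abs] using hKb y hy)
      (convex_Icc _ _) hx₀I hx
    simpa [Real.norm_eq_abs] using this
  -- min of deriv m on I
  obtain ⟨zc, hzc, hcmin⟩ := isCompact_Icc.exists_isMinOn hIne hdc.continuousOn
  set c := deriv m zc with hcdef
  have hc0 : 0 < c := hm' zc
  have hcb : ∀ x ∈ I, c ≤ deriv m x := fun x hx => hcmin hx
  -- values at x₀ ± 1
  have hp1 : 0 < m (x₀ + 1) := by
    have := hmono (show x₀ < x₀ + 1 by linarith); rw [hx₀] at this; exact this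
  have hn1 : m (x₀ - 1) < 0 := by
    have := hmono (show x₀ - 1 < x₀ by linarith); rw [hx₀] at this; exact this
  set ε : ℝ := min 1 (min ((m (x₀ + 1)) ^ 2) ((m (x₀ - 1)) ^ 2)) with hεdef
  have hε : 0 < ε := by
    have h1 : 0 < (m (x₀ + 1)) ^ 2 := by positivity
    have h2 : 0 < (m (x₀ - 1)) ^ 2 := by nlinarith
    simp only [hεdef, lt_min_iff]
    exact ⟨one_pos, h1, h2⟩
  rw [Asymptotics.isBigO_iff]
  refine ⟨2 * K / (c ^ 2 * deriv m x₀), ?_⟩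
  filter_upwards [Ioo_mem_nhdsGT_of_mem (show (0:ℝ) ∈ Set.Ico 0 ε from ⟨le_refl _, hε⟩)]
    with E hE
  obtain ⟨hE0, hEε⟩ := hE
  have hE1 : E < 1 := lt_of_lt_of_le hEε (min_le_left _ _)
  have hEP : E ≤ (m (x₀ + 1)) ^ 2 :=
    le_trans hEε.le (le_trans (min_le_right _ _) (min_le_left _ _))
  have hEN : E ≤ (m (x₀ - 1)) ^ 2 :=
    le_trans hEε.le (le_trans (min_le_right _ _) (min_le_right _ _))
  obtain ⟨hab, ha2, hb2, -⟩ := hturn E ⟨hE0, hE1⟩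
  set s : ℝ := Real.sqrt E with hsdef
  have hs0 : 0 < s := Real.sqrt_pos.mpr hE0
  have hsE : s ^ 2 = E := Real.sq_sqrt hE0.le
  -- values at turning points
  have haabs : |m (xm E)| = s := by rw [← Real.sqrt_sq_eq_abs, ha2]
  have hbabs : |m (xp E)| = s := by rw [← Real.sqrt_sq_eq_abs, hb2]
  have hlt : m (xm E) < m (xp E) := hmono hab
  have hma : m (xm E) = -s := by
    rcases (abs_eq hs0.le).mp haabs with h | h
    · rcases (abs_eq hs0.le).mp hbabs with h' | h' <;> rw [h, h'] at hlt <;> linarith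
    · exact h
  have hmb : m (xp E) = s := by
    rcases (abs_eq hs0.le).mp hbabs with h | h
    · exact h
    · rw [hma, h] at hlt; linarith
  -- comparison with endpoints of I
  have hsle1 : s ≤ m (x₀ + 1) := by
    have := Real.sqrt_le_sqrt hEP
    rwa [Real.sqrt_sq hp1.le] at this
  have hsle2 : s ≤ -m (x₀ - 1) := by
    have := Real.sqrt_le_sqrt hEN
    rwa [Real.sqrt_sq_eq_abs, abs_of_neg hn1] at this
  have hble : xp E ≤ x₀ + 1 := by
    have : m (xp E) ≤ m (x₀ + 1) := by rw [hmb]; exact hsle1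
    exact hmono.le_iff_le.mp this
  have hx0b : x₀ < xp E := by
    have : m x₀ < m (xp E) := by rw [hmb, hx₀]; exact hs0
    exact hmono.lt_iff_lt.mp this
  have hale : x₀ - 1 ≤ xm E := by
    have : m (x₀ - 1) ≤ m (xm E) := by rw [hma]; linarith
    exact hmono.le_iff_le.mp this
  have hax0 : xm E < x₀ := by
    have : m (xm E) < m x₀ := by rw [hma, hx₀]; linarith
    exact hmono.lt_iff_lt.mp this
  -- MVT estimates for the turning points
  have hbx0 : xp E - x₀ ≤ s / c := by
    obtain ⟨ξ, hξ, hslope⟩ := exists_deriv_eq_slope m hx0b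
      hmc.continuousOn hmd.differentiableOn
    have hξI : ξ ∈ I := ⟨by linarith [hξ.1], by linarith [hξ.2]⟩
    rw [hmb, hx₀, sub_zero] at hslope
    have hcle : c ≤ s / (xp E - x₀) := hslope ▸ hcb ξ hξI
    have hpos : (0:ℝ) < xp E - x₀ := by linarith
    have h := (le_div_iff₀ hpos).mp hcle
    rw [le_div_iff₀ hc0]; nlinarith
  have hax : x₀ - xm E ≤ s / c := by
    obtain ⟨ξ, hξ, hslope⟩ := exists_deriv_eq_slope m hax0
      hmc.continuousOn hmd.differentiableOn
    have hξI : ξ ∈ I := ⟨by linarith [hξ.1], by linarith [hξ.2]⟩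
    rw [hma, hx₀] at hslope
    have hcle : c ≤ (0 - -s) / (x₀ - xm E) := hslope ▸ hcb ξ hξI
    rw [zero_sub, neg_neg] at hcle
    have hpos : (0:ℝ) < x₀ - xm E := by linarith
    have h := (le_div_iff₀ hpos).mp hcle
    rw [le_div_iff₀ hc0]; nlinarith
  -- substitution identity
  have hgc : Continuous fun u : ℝ => Real.sqrt (E - u ^ 2) :=
    (continuous_const.sub (continuous_pow 2)).sqrt
  have hsub : (∫ x in xm E..xp E, Real.sqrt (E - m x ^ 2) * deriv m x)
      = Real.pi * E / 2 := by
    have h := intervalIntegral.integral_comp_mul_deriv (a := xm E) (b := xp E)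
      (f := m) (f' := deriv m) (g := fun u => Real.sqrt (E - u ^ 2))
      (fun x _ => (hmd x).hasDerivAt) hdc.continuousOn hgc
    simp only [Function.comp] at h
    rw [hma, hmb] at h
    rw [h]
    have : (∫ u in (-s)..s, Real.sqrt (E - u ^ 2))
        = ∫ u in (-s)..s, Real.sqrt (s ^ 2 - u ^ 2) := by
      rw [hsE]
    rw [this, semicircle_integral s hs0.le, hsE]
  have hkey : Real.pi * E / (2 * deriv m x₀)
      = ∫ x in xm E..xp E, Real.sqrt (E - m x ^ 2) * deriv m x / deriv m x₀ := by
    rw [intervalIntegral.integral_div, hsub]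
    field_simp
  -- integrability
  have hcont1 : Continuous fun x => Real.sqrt (E - m x ^ 2) :=
    (continuous_const.sub (hmc.pow 2)).sqrt
  have hint1 : IntervalIntegrable (fun x => Real.sqrt (E - m x ^ 2))
      MeasureTheory.volume (xm E) (xp E) := hcont1.intervalIntegrable _ _
  have hint2 : IntervalIntegrable
      (fun x => Real.sqrt (E - m x ^ 2) * deriv m x / deriv m x₀)
      MeasureTheory.volume (xm E) (xp E) :=
    ((hcont1.mul hdc).div_const _).intervalIntegrable _ _
  have hdiffeq : (∫ x in xm E..xp E, Real.sqrt (E - m x ^ 2))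
      - Real.pi * E / (2 * deriv m x₀)
      = ∫ x in xm E..xp E,
          (Real.sqrt (E - m x ^ 2) - Real.sqrt (E - m x ^ 2) * deriv m x / deriv m x₀) := by
    rw [hkey, intervalIntegral.integral_sub hint1 hint2]
  -- pointwise bound
  set C : ℝ := s * (K * (s / c)) / deriv m x₀ with hCdef
  have hptwise : ∀ x ∈ Set.uIoc (xm E) (xp E),
      ‖Real.sqrt (E - m x ^ 2) - Real.sqrt (E - m x ^ 2) * deriv m x / deriv m x₀‖ ≤ C := by
    intro x hx
    rw [Set.uIoc_of_le hab.le] at hx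
    obtain ⟨hx1, hx2⟩ := hx
    have hxI : x ∈ I := ⟨by linarith, by linarith⟩
    have habs : |x - x₀| ≤ s / c := by
      rw [abs_le]; constructor <;> linarith
    have h1 : Real.sqrt (E - m x ^ 2) ≤ s := by
      have := Real.sqrt_le_sqrt (show E - m x ^ 2 ≤ E by nlinarith [sq_nonneg (m x)])
      rwa [hsdef]
    have h2 : |deriv m x₀ - deriv m x| ≤ K * (s / c) := by
      rw [abs_sub_comm]
      exact le_trans (hLip x hxI) (mul_le_mul_of_nonneg_left habs hK0)
    have heq : Real.sqrt (E - m x ^ 2) - Real.sqrt (E - m x ^ 2) * deriv m x / deriv m x₀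
        = Real.sqrt (E - m x ^ 2) * (deriv m x₀ - deriv m x) / deriv m x₀ := by
      field_simp
    rw [heq, Real.norm_eq_abs, abs_div, abs_mul,
      abs_of_nonneg (Real.sqrt_nonneg _), abs_of_pos hd₀, hCdef]
    exact div_le_div_of_nonneg_right (mul_le_mul h1 h2 (abs_nonneg _) hs0.le) hd₀.le
  have hnorm := intervalIntegral.norm_integral_le_of_norm_le_const hptwise
  rw [← hdiffeq] at hnorm
  -- final bound
  have hC0 : 0 ≤ C := by
    rw [hCdef]; positivity
  have hba : |xp E - xm E| ≤ 2 * s / c := by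
    rw [abs_of_pos (by linarith : (0:ℝ) < xp E - xm E)]
    have h2s : 2 * s / c = s / c + s / c := by ring
    rw [h2s]; linarith
  have hfinal : C * |xp E - xm E| ≤ 2 * K / (c ^ 2 * deriv m x₀) * (E * s) := by
    have h := mul_le_mul_of_nonneg_left hba hC0
    refine le_trans h (le_of_eq ?_)
    rw [hCdef, ← hsE]
    field_simp
  have hE32 : E ^ ((3:ℝ)/2) = E * s := by
    rw [hsdef, show (3:ℝ)/2 = 1 + 1/2 by norm_num, Real.rpow_add hE0, Real.rpow_one,
      ← Real.sqrt_eq_rpow]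
  rw [Real.norm_eq_abs (E ^ ((3:ℝ)/2)), abs_of_nonneg (by positivity), hE32]
  calc ‖(∫ x in xm E..xp E, Real.sqrt (E - m x ^ 2))
      - Real.pi * E / (2 * deriv m x₀)‖ ≤ C * |xp E - xm E| := hnorm
    _ ≤ 2 * K / (c ^ 2 * deriv m x₀) * (E * s) := hfinal
end

section
/- For every E ∈ (0,1), ∫_{−artanh(√E)}^{artanh(√E)} √(E − tanh(x)²) dx = π·(1 − √(1 − E)). Here artanh(√E) is the inverse hyperbolic tangent of √E, so the interval of integration is exactly the classically allowed region {x : tanh(x)² < E}. -/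
open intervalIntegral Real

/-- Inverse hyperbolic tangent: `artanh y = ½ log((1 + y)/(1 − y))`. -/
noncomputable def artanh (y : ℝ) : ℝ := (1 / 2) * Real.log ((1 + y) / (1 - y))

set_option maxHeartbeats 1000000 in
/-- for the mass profile `m(x) = tanh x` and `E ∈ (0,1)`, the
Bohr–Sommerfeld phase integral over the classically allowed region
`[−artanh √E, artanh √E]` evaluates in closed form:
`∫ √(E − tanh²x) dx = π(1 − √(1 − E))`. -/
theorem stmt14 (E : ℝ) (hE : E ∈ Set.Ioo (0 : ℝ) 1) :
    ∫ x in (-_root_.artanh (Real.sqrt E))..(_root_.artanh (Real.sqrt E)),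
        Real.sqrt (E - Real.tanh x ^ 2) =
      Real.pi * (1 - Real.sqrt (1 - E)) := by
  obtain ⟨hE0, hE1⟩ := hE
  set a : ℝ := Real.sqrt E with ha
  set b : ℝ := Real.sqrt (1 - E) with hb
  have ha0 : 0 < a := Real.sqrt_pos.2 hE0
  have hb0 : 0 < b := Real.sqrt_pos.2 (by linarith)
  have ha2 : a ^ 2 = E := Real.sq_sqrt hE0.le
  have hb2 : b ^ 2 = 1 - E := Real.sq_sqrt (by linarith)
  have ha1 : a < 1 := by nlinarith
  set L : ℝ := _root_.artanh a with hL
  -- auxiliary square roots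
  set u : ℝ := Real.sqrt (1 + a) with hu
  set v : ℝ := Real.sqrt (1 - a) with hv
  have hu0 : 0 < u := Real.sqrt_pos.2 (by linarith)
  have hv0 : 0 < v := Real.sqrt_pos.2 (by linarith)
  have hu2 : u ^ 2 = 1 + a := Real.sq_sqrt (by linarith)
  have hv2 : v ^ 2 = 1 - a := Real.sq_sqrt (by linarith)
  have huv : u * v = b := by
    rw [hu, hv, ← Real.sqrt_mul (by linarith : (0:ℝ) ≤ 1 + a), hb]
    congr 1
    linear_combination -ha2
  have hexp : Real.exp L = u / v := by
    have h1 : (1 + a) / (1 - a) = (u / v) ^ 2 := by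
      rw [div_pow, hu2, hv2]
    rw [hL, _root_.artanh, h1, ← Real.rpow_natCast (u/v) 2, Real.log_rpow (div_pos hu0 hv0)]
    push_cast
    rw [show (1:ℝ)/2 * (2 * Real.log (u/v)) = Real.log (u/v) by ring,
      Real.exp_log (div_pos hu0 hv0)]
  have hsinhL : Real.sinh L = a / b := by
    rw [Real.sinh_eq, hexp, Real.exp_neg, hexp, ← huv]
    field_simp
    ring_nf
    linear_combination hu2 - hv2
  have hcoshL : Real.cosh L = 1 / b := by
    rw [Real.cosh_eq, hexp, Real.exp_neg, hexp, ← huv]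
    field_simp
    ring_nf
    linear_combination hu2 + hv2
  have hLpos : 0 < L := by
    have : 0 < Real.sinh L := by rw [hsinhL]; positivity
    exact Real.sinh_pos_iff.1 this
  -- the antiderivative
  set F : ℝ → ℝ := fun x =>
    Real.arcsin (Real.sinh x / (a * Real.cosh x)) - b * Real.arcsin (b / a * Real.sinh x)
    with hF
  have hderiv : ∀ x ∈ Set.Ioo (-L) L,
      HasDerivAt F (Real.sqrt (E - Real.tanh x ^ 2)) x := by
    intro x hx
    obtain ⟨hx1, hx2⟩ := hx
    set s : ℝ := Real.sinh x with hs
    set c : ℝ := Real.cosh x with hc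
    have hc0 : 0 < c := Real.cosh_pos x
    have hc2 : c ^ 2 = 1 + s ^ 2 := Real.cosh_sq' x
    -- bounds : |s| < a * c
    have hub : s < a * c := by
      have h := Real.sinh_sub x L
      have hneg : Real.sinh (x - L) < 0 := by
        rw [Real.sinh_neg_iff]; linarith
      rw [h, hsinhL, hcoshL] at hneg
      have e : s * (1/b) - c * (a/b) = (s - a * c) / b := by ring
      rw [e] at hneg
      have h2 := mul_neg_of_neg_of_pos hneg hb0
      rw [div_mul_cancel₀ _ hb0.ne'] at h2
      linarith
    have hlb : -(a * c) < s := by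
      have h := Real.sinh_sub (-L) x
      have hneg : Real.sinh (-L - x) < 0 := by
        rw [Real.sinh_neg_iff]; linarith
      rw [h, Real.sinh_neg, Real.cosh_neg, hsinhL, hcoshL] at hneg
      have e : -(a/b) * c - 1/b * s = (-(a * c) - s) / b := by ring
      rw [e] at hneg
      have h2 := mul_neg_of_neg_of_pos hneg hb0
      rw [div_mul_cancel₀ _ hb0.ne'] at h2
      linarith
    have hac0 : 0 < a * c := mul_pos ha0 hc0
    -- bounds for second arcsin argument: |s| < a / b
    have hub2 : b / a * s < 1 := by
      have hsL : s < a / b := by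
        have := Real.sinh_lt_sinh.2 hx2
        rwa [hsinhL] at this
      have h2 := mul_lt_mul_of_pos_left hsL hb0
      rw [mul_div_assoc', mul_comm b a, mul_div_assoc, div_self hb0.ne', mul_one] at h2
      rw [div_mul_eq_mul_div, div_lt_one ha0]
      linarith
    have hlb2 : -1 < b / a * s := by
      have hsL : -(a / b) < s := by
        have := Real.sinh_lt_sinh.2 hx1
        rwa [Real.sinh_neg, hsinhL] at this
      have h2 := mul_lt_mul_of_pos_left hsL hb0
      rw [mul_neg, mul_div_assoc', mul_comm b a, mul_div_assoc, div_self hb0.ne', mul_one] at h2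
      rw [div_mul_eq_mul_div, lt_div_iff₀ ha0]
      linarith
    -- first argument bounds
    have hw1 : s / (a * c) < 1 := (div_lt_one hac0).2 hub
    have hw2 : -1 < s / (a * c) := by
      rw [lt_div_iff₀ hac0]; linarith
    -- derivative of first term
    have hd1 : HasDerivAt (fun y => Real.sinh y / (a * Real.cosh y)) (1 / (a * c ^ 2)) x := by
      have h := (Real.hasDerivAt_sinh x).div ((Real.hasDerivAt_cosh x).const_mul a)
        (ne_of_gt hac0)
      refine h.congr_deriv ?_
      rw [← hs, ← hc]
      have h1 : c * (a * c) - s * (a * s) = a := by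
        have hcs : c ^ 2 - s ^ 2 = 1 := Real.cosh_sq_sub_sinh_sq x
        linear_combination a * hcs
      rw [h1]
      field_simp
    have harc1 : HasDerivAt (fun y => Real.arcsin (Real.sinh y / (a * Real.cosh y)))
        (1 / Real.sqrt (1 - (s / (a * c)) ^ 2) * (1 / (a * c ^ 2))) x := by
      have h := Real.hasDerivAt_arcsin (ne_of_gt hw2) (ne_of_lt hw1); rw [hs, hc] at h; exact h.comp x hd1
    -- derivative of second term
    have hd2 : HasDerivAt (fun y => b / a * Real.sinh y) (b / a * c) x :=
      (Real.hasDerivAt_sinh x).const_mul (b / a)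
    have harc2 : HasDerivAt (fun y => Real.arcsin (b / a * Real.sinh y))
        (1 / Real.sqrt (1 - (b / a * s) ^ 2) * (b / a * c)) x := by
      have h := Real.hasDerivAt_arcsin (ne_of_gt hlb2) (ne_of_lt hub2); rw [hs] at h; exact h.comp x hd2
    have hsum : HasDerivAt F
        (1 / Real.sqrt (1 - (s / (a * c)) ^ 2) * (1 / (a * c ^ 2)) -
          b * (1 / Real.sqrt (1 - (b / a * s) ^ 2) * (b / a * c))) x :=
      harc1.sub (harc2.const_mul b)
    convert hsum using 1
    -- the algebraic identity
    have hD0 : 0 < a ^ 2 * c ^ 2 - s ^ 2 := by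
      have h1 : 0 < a * c - s := by linarith
      have h2 : 0 < a * c + s := by linarith
      have := mul_pos h1 h2
      nlinarith
    have hsD2 : Real.sqrt (a ^ 2 * c ^ 2 - s ^ 2) ^ 2 = a ^ 2 * c ^ 2 - s ^ 2 :=
      Real.sq_sqrt hD0.le
    have hsD0 : 0 < Real.sqrt (a ^ 2 * c ^ 2 - s ^ 2) := Real.sqrt_pos.2 hD0
    have hb2' : b ^ 2 = 1 - a ^ 2 := by rw [hb2, ← ha2]
    have e1 : 1 - (s / (a * c)) ^ 2 = (a ^ 2 * c ^ 2 - s ^ 2) / (a * c) ^ 2 := by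
      field_simp
    have e2 : 1 - (b / a * s) ^ 2 = (a ^ 2 * c ^ 2 - s ^ 2) / a ^ 2 := by
      field_simp
      linear_combination (-s ^ 2) * hb2' - a ^ 2 * hc2
    have e3 : E - Real.tanh x ^ 2 = (a ^ 2 * c ^ 2 - s ^ 2) / c ^ 2 := by
      rw [Real.tanh_eq_sinh_div_cosh, ← hs, ← hc]
      field_simp
      linear_combination (-c ^ 2) * ha2
    rw [e1, e2, e3, Real.sqrt_div hD0.le, Real.sqrt_div hD0.le, Real.sqrt_div hD0.le,
      Real.sqrt_sq hac0.le, Real.sqrt_sq ha0.le, Real.sqrt_sq hc0.le]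
    field_simp
    linear_combination hsD2 + c ^ 2 * hb2' + hc2
  -- continuity of F
  have hcont : ContinuousOn F (Set.Icc (-L) L) := by
    apply Continuous.continuousOn
    apply Continuous.sub
    · exact Real.continuous_arcsin.comp
        (Real.continuous_sinh.div (continuous_const.mul Real.continuous_cosh)
          (fun x => ne_of_gt (mul_pos ha0 (Real.cosh_pos x))))
    · exact continuous_const.mul (Real.continuous_arcsin.comp
        (continuous_const.mul Real.continuous_sinh))
  have htanh_cont : Continuous Real.tanh := by
    have h : Real.tanh = fun x => Real.sinh x / Real.cosh x := by
      funext x; exact Real.tanh_eq_sinh_div_cosh x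
    rw [h]
    exact Real.continuous_sinh.div Real.continuous_cosh
      (fun x => ne_of_gt (Real.cosh_pos x))
  have hint : IntervalIntegrable (fun x => Real.sqrt (E - Real.tanh x ^ 2))
      MeasureTheory.volume (-L) L :=
    (Real.continuous_sqrt.comp (continuous_const.sub (htanh_cont.pow 2))).intervalIntegrable _ _
  rw [integral_eq_sub_of_hasDerivAt_of_le (by linarith) hcont hderiv hint]
  -- evaluate the endpoints
  have hFL : F L = Real.pi / 2 - b * (Real.pi / 2) := by
    rw [hF]
    simp only
    rw [hsinhL, hcoshL]
    have e1 : a / b / (a * (1 / b)) = 1 := by field_simp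
    have e2 : b / a * (a / b) = 1 := by field_simp
    rw [e1, e2, Real.arcsin_one]
  have hFnL : F (-L) = -(Real.pi / 2) - b * (-(Real.pi / 2)) := by
    rw [hF]
    simp only [Real.sinh_neg, Real.cosh_neg]
    rw [hsinhL, hcoshL]
    have e1 : -(a / b) / (a * (1 / b)) = -1 := by field_simp
    have e2 : b / a * -(a / b) = -1 := by field_simp
    rw [e1, e2, Real.arcsin_neg_one]
  rw [hFL, hFnL]
  ring
end

section
/- Let m : ℝ → ℝ be twice continuously differentiable, let E ∈ ℝ, and let x_τ ∈ ℝ satisfy m(x_τ)² = E with λ := 2·m(x_τ)·m′(x_τ) < 0. Assume there is r > 0 such that E − m(s)² > 0 for all s ∈ (x_τ, x_τ + r]. Then, as δ → 0⁺, ∫_{x_τ}^{x_τ + δ} √(E − m(s)²) ds = (2/3)·√(−λ)·δ^{3/2} + O(δ^{5/2}). -/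
open intervalIntegral Filter Asymptotics Real

lemma my_sqrt_diff_le (a b : ℝ) (ha : 0 ≤ a) (hb : 0 < b) :
    |Real.sqrt a - Real.sqrt b| ≤ |a - b| / Real.sqrt b := by
  have hsb : 0 < Real.sqrt b := Real.sqrt_pos.mpr hb
  rw [le_div_iff₀ hsb]
  have h1 : Real.sqrt a ^ 2 = a := Real.sq_sqrt ha
  have h2 : Real.sqrt b ^ 2 = b := Real.sq_sqrt hb.le
  have hsa : 0 ≤ Real.sqrt a := Real.sqrt_nonneg a
  have key : |Real.sqrt a - Real.sqrt b| * (Real.sqrt a + Real.sqrt b) = |a - b| := by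
    rw [← abs_of_nonneg (show (0:ℝ) ≤ Real.sqrt a + Real.sqrt b by positivity), ← abs_mul]
    congr 1; nlinarith
  nlinarith [abs_nonneg (Real.sqrt a - Real.sqrt b)]


/-- at a left turning point `x_τ` (`m(x_τ)² = E`,
`λ = 2m(x_τ)m′(x_τ) < 0`, with the classically allowed region immediately to the
right), the leading WKB phase satisfies, as `δ → 0⁺`,
`∫_{x_τ}^{x_τ+δ} √(E − m(s)²) ds = (2/3)√(−λ) δ^{3/2} + O(δ^{5/2})`. -/
theorem stmt19 (m : ℝ → ℝ) (hm : ContDiff ℝ 2 m) (E : ℝ)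
    (xτ : ℝ) (hturn : m xτ ^ 2 = E)
    (lam : ℝ) (hlam : lam = 2 * m xτ * deriv m xτ) (hneg : lam < 0)
    (r : ℝ) (hr : 0 < r)
    (hallowed : ∀ s ∈ Set.Ioc xτ (xτ + r), 0 < E - m s ^ 2) :
    (fun δ : ℝ =>
        (∫ s in xτ..(xτ + δ), Real.sqrt (E - m s ^ 2)) -
          (2 / 3) * Real.sqrt (-lam) * δ ^ ((3 : ℝ) / 2))
      =O[nhdsWithin 0 (Set.Ioi 0)] fun δ : ℝ => δ ^ ((5 : ℝ) / 2) := by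
  set μ : ℝ := -lam with hμdef
  have hμpos : (0:ℝ) < μ := by simp [hμdef]; linarith
  have hsμ : 0 < Real.sqrt μ := Real.sqrt_pos.mpr hμpos
  -- `m` is differentiable, f := E - m^2 has derivative g := -(2 m m')
  have hdm : Differentiable ℝ m := hm.differentiable (by norm_num)
  set g : ℝ → ℝ := fun x => -(2 * m x * deriv m x) with hgdef
  have hderiv : ∀ x : ℝ, HasDerivAt (fun x => E - m x ^ 2) (g x) x := by
    intro x
    have h1 : HasDerivAt (fun x => m x ^ 2) (2 * m x * deriv m x) x := by
      have := ((hdm x).hasDerivAt).pow 2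
      exact this.congr_deriv (by simp only [Nat.cast_ofNat, Nat.add_one_sub_one, pow_one])
    exact ((hasDerivAt_const x E).sub h1).congr_deriv (by simp [hgdef])
  have hgxτ : g xτ = μ := by simp [hgdef, hlam, hμdef]
  -- g is C¹
  have hdm' : ContDiff ℝ 1 (deriv m) := by
    have : ContDiff ℝ (1 + 1 : ℕ) m := by exact_mod_cast hm
    exact ((contDiff_succ_iff_deriv.mp (by exact_mod_cast this)).2.2)
  have hg1 : ContDiff ℝ 1 g := by
    exact (((contDiff_const.mul (hm.of_le (by norm_num))).mul hdm')).neg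
  have hgdiff : Differentiable ℝ g := hg1.differentiable (by norm_num)
  have hgc : Continuous (deriv g) := hg1.continuous_deriv le_rfl
  -- bound K on |deriv g| on [xτ, xτ+1]
  obtain ⟨K, hK⟩ := (isCompact_Icc (a := xτ) (b := xτ + 1)).exists_bound_of_continuousOn
    (hgc.continuousOn.norm)
  have hK0 : 0 ≤ K := le_trans (norm_nonneg _) (hK xτ ⟨le_refl _, by linarith⟩)
  -- Lipschitz bound for g near xτ
  have hLip : ∀ s ∈ Set.Icc xτ (xτ + 1), |g s - g xτ| ≤ K * (s - xτ) := by
    intro s hs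
    have := Convex.norm_image_sub_le_of_norm_hasDerivWithin_le
      (f := g) (f' := deriv g) (s := Set.Icc xτ (xτ + 1)) (C := K)
      (fun x _ => (hgdiff x).hasDerivAt.hasDerivWithinAt)
      (fun x hx => by simpa using hK x hx) (convex_Icc _ _) ⟨le_refl _, by linarith⟩ hs
    simpa [Real.norm_eq_abs, abs_of_nonneg (sub_nonneg.mpr hs.1)] using this
  -- Taylor bound: |f(xτ+t) - μ t| ≤ K t² for t ∈ [0,1]
  have hTaylor : ∀ t ∈ Set.Icc (0:ℝ) 1, |(E - m (xτ + t) ^ 2) - μ * t| ≤ K * t ^ 2 := by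
    intro t ht
    have hφ : ∀ x : ℝ, HasDerivAt (fun x => (E - m x ^ 2) - μ * x) (g x - μ) x := by
      intro x
      exact ((hderiv x).sub ((hasDerivAt_id x).const_mul μ)).congr_deriv (by simp)
    have hsub : Set.Icc xτ (xτ + t) ⊆ Set.Icc xτ (xτ + 1) :=
      Set.Icc_subset_Icc le_rfl (by linarith [ht.2])
    have hb := Convex.norm_image_sub_le_of_norm_hasDerivWithin_le
      (f := fun x => (E - m x ^ 2) - μ * x) (f' := fun x => g x - μ)
      (s := Set.Icc xτ (xτ + t)) (C := K * t)
      (fun x _ => (hφ x).hasDerivWithinAt)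
      (fun x hx => by
        have h1 : |g x - g xτ| ≤ K * (x - xτ) := hLip x (hsub hx)
        have h2 : x - xτ ≤ t := by linarith [hx.2]
        calc ‖g x - μ‖ = |g x - g xτ| := by rw [hgxτ]; rfl
          _ ≤ K * (x - xτ) := h1
          _ ≤ K * t := by nlinarith)
      (convex_Icc _ _) ⟨le_refl _, by linarith [ht.1]⟩ ⟨by linarith [ht.1], le_refl _⟩
    have hE0 : E - m xτ ^ 2 = 0 := by rw [hturn]; ring
    have : ‖((E - m (xτ + t) ^ 2) - μ * (xτ + t)) - ((E - m xτ ^ 2) - μ * xτ)‖ ≤ K * t * ‖(xτ + t) - xτ‖ := hb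
    rw [Real.norm_eq_abs, Real.norm_eq_abs, hE0] at this
    have ht' : |xτ + t - xτ| = t := by rw [abs_of_nonneg (by linarith [ht.1])]; ring_nf
    rw [ht'] at this
    calc |(E - m (xτ + t) ^ 2) - μ * t| = |(E - m (xτ + t) ^ 2 - μ * (xτ + t)) - (0 - μ * xτ)| := by ring_nf
      _ ≤ K * t * t := this
      _ = K * t ^ 2 := by ring
  -- choose δ₀
  set δ₀ : ℝ := min (μ / (2 * (K + 1))) 1 with hδ₀def
  have hδ₀pos : 0 < δ₀ := lt_min (by positivity) one_pos
  have hδ₀le1 : δ₀ ≤ 1 := min_le_right _ _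
  have hδ₀leμ : K * δ₀ ≤ μ / 2 := by
    have h1 : δ₀ ≤ μ / (2 * (K + 1)) := min_le_left _ _
    have h2 : K * δ₀ ≤ K * (μ / (2 * (K + 1))) := by nlinarith
    have h3 : K * (μ / (2 * (K + 1))) ≤ μ / 2 := by
      rw [← mul_div_assoc, div_le_div_iff₀ (by positivity) (by norm_num)]
      nlinarith
    linarith
  -- positivity and sqrt bound
  set C : ℝ := K / Real.sqrt μ with hCdef
  have hC0 : 0 ≤ C := by positivity
  have hpos : ∀ t ∈ Set.Ioc (0:ℝ) δ₀, 0 ≤ E - m (xτ + t) ^ 2 := by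
    intro t ht
    have h1 := hTaylor t ⟨ht.1.le, le_trans ht.2 hδ₀le1⟩
    have h2 : K * t ≤ μ / 2 := by nlinarith [ht.1.le, ht.2, hK0]
    have h3 : E - m (xτ + t) ^ 2 ≥ μ * t - K * t ^ 2 := by
      have := abs_le.mp h1; linarith [this.1]
    nlinarith [ht.1]
  have hsqrtbd : ∀ t ∈ Set.Ioc (0:ℝ) δ₀,
      |Real.sqrt (E - m (xτ + t) ^ 2) - Real.sqrt μ * Real.sqrt t| ≤ C * (t * Real.sqrt t) := by
    intro t ht
    have ht0 : 0 < t := ht.1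
    have hst : 0 < Real.sqrt t := Real.sqrt_pos.mpr ht0
    have hb : 0 < μ * t := by positivity
    have h1 := my_sqrt_diff_le (E - m (xτ + t) ^ 2) (μ * t) (hpos t ht) hb
    rw [Real.sqrt_mul hμpos.le] at h1
    have h2 := hTaylor t ⟨ht0.le, le_trans ht.2 hδ₀le1⟩
    have h3 : |(E - m (xτ + t) ^ 2) - μ * t| / (Real.sqrt μ * Real.sqrt t)
        ≤ (K * t ^ 2) / (Real.sqrt μ * Real.sqrt t) := by
      apply div_le_div_of_nonneg_right h2 (by positivity) |>.trans_eq rfl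
    have h4 : (K * t ^ 2) / (Real.sqrt μ * Real.sqrt t) = C * (t * Real.sqrt t) := by
      have hq : Real.sqrt t * Real.sqrt t = t := Real.mul_self_sqrt ht0.le
      rw [hCdef, div_mul_eq_mul_div, div_eq_div_iff (by positivity) (by positivity)]
      linear_combination (-(K * Real.sqrt μ * t)) * hq
    calc |Real.sqrt (E - m (xτ + t) ^ 2) - Real.sqrt μ * Real.sqrt t|
        ≤ |(E - m (xτ + t) ^ 2) - μ * t| / (Real.sqrt μ * Real.sqrt t) := h1
      _ ≤ (K * t ^ 2) / (Real.sqrt μ * Real.sqrt t) := h3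
      _ = C * (t * Real.sqrt t) := h4
  -- the main term integral
  have hMain : ∀ δ : ℝ, (∫ s in xτ..(xτ + δ), Real.sqrt μ * Real.sqrt (s - xτ))
      = 2 / 3 * Real.sqrt μ * δ ^ ((3:ℝ)/2) := by
    intro δ
    have hF : ∀ s ∈ Set.uIcc xτ (xτ + δ),
        HasDerivAt (fun s => 2 / 3 * Real.sqrt μ * (s - xτ) ^ ((3:ℝ)/2))
          (Real.sqrt μ * Real.sqrt (s - xτ)) s := by
      intro s _
      have h1 : HasDerivAt (fun u : ℝ => u ^ ((3:ℝ)/2))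
          ((3:ℝ)/2 * (s - xτ) ^ ((3:ℝ)/2 - 1)) (s - xτ) :=
        Real.hasDerivAt_rpow_const (Or.inr (by norm_num))
      have h2 : HasDerivAt (fun s : ℝ => s - xτ) 1 s := (hasDerivAt_id s).sub_const xτ
      have h3 := (h1.comp s h2).const_mul (2 / 3 * Real.sqrt μ)
      refine h3.congr_deriv ?_
      rw [show (3:ℝ)/2 - 1 = 1/2 by norm_num, ← Real.sqrt_eq_rpow]
      ring
    have hcont : Continuous (fun s : ℝ => Real.sqrt μ * Real.sqrt (s - xτ)) :=
      continuous_const.mul (Real.continuous_sqrt.comp (continuous_id.sub continuous_const))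
    rw [intervalIntegral.integral_eq_sub_of_hasDerivAt hF (hcont.intervalIntegrable _ _)]
    have : (xτ + δ - xτ) = δ := by ring
    rw [this, sub_self, Real.zero_rpow (by norm_num)]
    ring
  -- assemble
  rw [isBigO_iff]
  refine ⟨C, ?_⟩
  filter_upwards [Ioo_mem_nhdsGT_of_mem (show (0:ℝ) ∈ Set.Ico 0 δ₀ from ⟨le_refl 0, hδ₀pos⟩)]
    with δ hδ
  obtain ⟨hδ0, hδlt⟩ := hδ
  have hcont1 : Continuous (fun s : ℝ => Real.sqrt (E - m s ^ 2)) :=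
    Real.continuous_sqrt.comp (continuous_const.sub (hm.continuous.pow 2))
  have hcont2 : Continuous (fun s : ℝ => Real.sqrt μ * Real.sqrt (s - xτ)) :=
    continuous_const.mul (Real.continuous_sqrt.comp (continuous_id.sub continuous_const))
  have hsplit : (∫ s in xτ..(xτ + δ), Real.sqrt (E - m s ^ 2)) - 2 / 3 * Real.sqrt μ * δ ^ ((3:ℝ)/2)
      = ∫ s in xτ..(xτ + δ), (Real.sqrt (E - m s ^ 2) - Real.sqrt μ * Real.sqrt (s - xτ)) := by
    rw [intervalIntegral.integral_sub (hcont1.intervalIntegrable _ _) (hcont2.intervalIntegrable _ _),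
      hMain δ]
  have hbd : ‖∫ s in xτ..(xτ + δ), (Real.sqrt (E - m s ^ 2) - Real.sqrt μ * Real.sqrt (s - xτ))‖
      ≤ (C * (δ * Real.sqrt δ)) * |xτ + δ - xτ| := by
    apply intervalIntegral.norm_integral_le_of_norm_le_const
    intro x hx
    rw [Set.uIoc_of_le (by linarith)] at hx
    have hxt : x - xτ ∈ Set.Ioc (0:ℝ) δ₀ := ⟨by linarith [hx.1], by linarith [hx.2]⟩
    have h1 := hsqrtbd (x - xτ) hxt
    rw [show xτ + (x - xτ) = x by ring] at h1
    have h2 : (x - xτ) * Real.sqrt (x - xτ) ≤ δ * Real.sqrt δ := by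
      have ht1 : x - xτ ≤ δ := by linarith [hx.2]
      have ht2 : Real.sqrt (x - xτ) ≤ Real.sqrt δ := Real.sqrt_le_sqrt ht1
      nlinarith [Real.sqrt_nonneg (x - xτ), hxt.1.le]
    calc ‖Real.sqrt (E - m x ^ 2) - Real.sqrt μ * Real.sqrt (x - xτ)‖
        ≤ C * ((x - xτ) * Real.sqrt (x - xτ)) := h1
      _ ≤ C * (δ * Real.sqrt δ) := by nlinarith
  have h52 : δ ^ ((5:ℝ)/2) = δ ^ 2 * Real.sqrt δ := by
    rw [show (5:ℝ)/2 = ((2:ℕ):ℝ) + 1/2 by norm_num, Real.rpow_add hδ0, Real.rpow_natCast,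
      ← Real.sqrt_eq_rpow]
  rw [hsplit]
  calc ‖∫ s in xτ..(xτ + δ), (Real.sqrt (E - m s ^ 2) - Real.sqrt μ * Real.sqrt (s - xτ))‖
      ≤ (C * (δ * Real.sqrt δ)) * |xτ + δ - xτ| := hbd
    _ = C * (δ ^ 2 * Real.sqrt δ) := by
        rw [show xτ + δ - xτ = δ by ring, abs_of_pos hδ0]; ring
    _ ≤ C * ‖δ ^ ((5:ℝ)/2)‖ := by
        rw [h52, Real.norm_eq_abs, abs_of_nonneg (by positivity)]
end
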